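/- arXiv:1707.02012 — 2 statements merged into one kernel-verified Lean document; each statement's English description precedes it below -/
import Mathlib

section
/- Fix nonnegative integers a,b,c with a ≤ c ≤ 2a and nonnegative integers x,y, and suppose the solution count m(x,y) (of triples (d,e,f), 0≤d≤2a-c, 0≤e≤b, f≥0, with d-e+f=x-b, e+f=y) is nonzero and y ≥ b and -x+y ≥ -b. Then, with δ∈{0,1} matching the parity of x+y-b, m(x,y) = min(⌊(2a-c-δ)/2⌋, (x-y+b-δ)/2, (x+y-b-δ)/2) + 1, and the set of solutions is exactly {(δ, (−x+y+b+δ)/2, (x+y−b−δ)/2) + j·(2,1,−1) : 0 ≤ j ≤ m(x,y)−1}. -/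
/-- The solution set: integer triples `(d,e,f)` with `0 ≤ d ≤ 2a−c`, `0 ≤ e ≤ b`, `0 ≤ f`,
`d − e + f = x − b`, `e + f = y`. -/
def solSet (a b c x y : ℕ) : Set (ℤ × ℤ × ℤ) :=
  {t | 0 ≤ t.1 ∧ t.1 ≤ 2 * (a : ℤ) - c ∧ 0 ≤ t.2.1 ∧ t.2.1 ≤ (b : ℤ) ∧ 0 ≤ t.2.2 ∧
    t.1 - t.2.1 + t.2.2 = (x : ℤ) - b ∧ t.2.1 + t.2.2 = (y : ℤ)}

/-- `mcount a b c x y` is the number of solutions. -/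
noncomputable def mcount (a b c x y : ℕ) : ℕ := Set.ncard (solSet a b c x y)

/-- If the solution count is nonzero, `y ≥ b` and `−x+y ≥ −b`, then (with `δ ∈ {0,1}` of the
parity of `x+y−b`) `m(x,y) = min(⌊(2a−c−δ)/2⌋, (x−y+b−δ)/2, (x+y−b−δ)/2) + 1` and the
solutions form the arithmetic progression starting at `(δ, (−x+y+b+δ)/2, (x+y−b−δ)/2)`
with common difference `(2,1,−1)`. -/
theorem mcount_closed_form_and_solutions (a b c x y : ℕ) (h1 : a ≤ c) (h2 : c ≤ 2 * a)
    (hne : mcount a b c x y ≠ 0) (hyb : b ≤ y) (hxb : -(b : ℤ) ≤ -(x : ℤ) + y)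
    (δ : ℤ) (hδ : δ = 0 ∨ δ = 1) (hpar : ((x : ℤ) + y - b - δ) % 2 = 0) :
    (mcount a b c x y : ℤ) =
      min (min ((2 * (a : ℤ) - c - δ) / 2) (((x : ℤ) - y + b - δ) / 2))
        (((x : ℤ) + y - b - δ) / 2) + 1 ∧
    solSet a b c x y =
      {t : ℤ × ℤ × ℤ | ∃ j : ℕ, (j : ℤ) ≤ (mcount a b c x y : ℤ) - 1 ∧
        t = (δ + 2 * j, (-(x : ℤ) + y + b + δ) / 2 + j, ((x : ℤ) + y - b - δ) / 2 - j)} := by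
  obtain ⟨A, hA⟩ : ∃ A : ℤ, A = (2 * (a : ℤ) - c - δ) / 2 := ⟨_, rfl⟩
  obtain ⟨B, hB⟩ : ∃ B : ℤ, B = ((x : ℤ) - y + b - δ) / 2 := ⟨_, rfl⟩
  obtain ⟨C, hC⟩ : ∃ C : ℤ, C = ((x : ℤ) + y - b - δ) / 2 := ⟨_, rfl⟩
  obtain ⟨M, hM⟩ : ∃ M : ℤ, M = min (min A B) C := ⟨_, rfl⟩
  have hMA : M ≤ A := hM ▸ le_trans (min_le_left _ _) (min_le_left _ _)
  have hMB : M ≤ B := hM ▸ le_trans (min_le_left _ _) (min_le_right _ _)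
  have hMC : M ≤ C := hM ▸ min_le_right _ _
  have hMor : M = A ∨ M = B ∨ M = C := by
    rw [hM, min_def, min_def]; split_ifs <;> tauto
  have hset : solSet a b c x y =
      (fun j : ℤ => ((δ + 2 * j : ℤ),
        ((-(x : ℤ) + y + b + δ) / 2 + j, ((x : ℤ) + y - b - δ) / 2 - j))) '' Set.Icc 0 M := by
    ext ⟨d, e, f⟩
    simp only [solSet, Set.mem_setOf_eq, Set.mem_image, Set.mem_Icc, Prod.mk.injEq]
    constructor
    · rintro ⟨hd0, hd1, he0, he1, hf0, heq1, heq2⟩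
      refine ⟨e - (-(x : ℤ) + y + b + δ) / 2, ⟨?_, ?_⟩, ?_, ?_, ?_⟩ <;> omega
    · rintro ⟨j, ⟨hj0, hj1⟩, rfl, rfl, rfl⟩
      refine ⟨?_, ?_, ?_, ?_, ?_, ?_, ?_⟩ <;> omega
  have hMnn : 0 ≤ M := by
    by_contra h
    apply hne
    have hempty : solSet a b c x y = ∅ := by
      rw [hset, Set.Icc_eq_empty (by omega), Set.image_empty]
    simp [mcount, hempty]
  have hinj : Function.Injective (fun j : ℤ => ((δ + 2 * j : ℤ),
      ((-(x : ℤ) + y + b + δ) / 2 + j, ((x : ℤ) + y - b - δ) / 2 - j))) := by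
    intro u v huv
    simp only [Prod.mk.injEq] at huv
    omega
  have hcard : (mcount a b c x y : ℤ) = M + 1 := by
    have h' : mcount a b c x y = (Set.Icc (0 : ℤ) M).ncard := by
      rw [mcount, hset, Set.ncard_image_of_injective _ hinj]
    rw [h', ← Finset.coe_Icc, Set.ncard_coe_finset, Int.card_Icc]
    omega
  constructor
  · rw [hcard, hM, hA, hB, hC]
  · rw [hset]
    ext ⟨d, e, f⟩
    simp only [Set.mem_image, Set.mem_Icc, Set.mem_setOf_eq, Prod.mk.injEq]
    constructor
    · rintro ⟨j, ⟨hj0, hj1⟩, rfl, rfl, rfl⟩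
      refine ⟨j.toNat, by omega, ?_, ?_, ?_⟩ <;> omega
    · rintro ⟨j, hj, rfl, rfl, rfl⟩
      refine ⟨(j : ℤ), ⟨by positivity, by omega⟩, ?_, ?_, ?_⟩ <;> omega
end

section
/- Let Sp6 act on the standard 6-dimensional symplectic space over R with Weyl group elements indexed as w_{(i,j)}, and let R be the parabolic stabilizing ⟨f1,f2⟩ with Levi GL2×Sp2. The intersections R_{(i,j)} = R ∩ w_{(i,j)}^{-1} R w_{(i,j)} for the representative w_{(1,1)} = 1_2 ⊠ J_2 ⊠ 1_2 (where J_2 = [[0,-1],[1,0]] acts on ⟨e2,f2⟩) consist exactly of the matrices of the block form with diagonal entries (t1, t2, m2, t2^{-1}, t1^{-1}) where m2 ∈ Sp2, upper-triangular stars as indicated: entries above the diagonal in positions (1,2),(1,3),(1,4),(1,5),(2,5),(3,5),(4,5) may be arbitrary subject to the symplectic condition. -/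
/-! The intersection `R_{(1,1)} = R ∩ w_{(1,1)}^{-1} R w_{(1,1)}` inside `Sp₆(ℝ)`, where `R`
is the parabolic stabilizing `⟨f1,f2⟩` and `w_{(1,1)} = 1₂ ⊠ J₂ ⊠ 1₂`. Coordinates `0,…,5`
of `ℝ⁶` are the basis vectors `e1,e2,e3,f3,f2,f1`; matrices act on the right of row vectors,
so the matrix entries below are exactly those of the displayed block form. -/

noncomputable section

open Matrix

abbrev V6 : Type := Fin 6 → ℝ

/-- Symplectic form; coordinates `0,…,5` are `e1,e2,e3,f3,f2,f1`. -/
def symp (x y : V6) : ℝ :=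
  x 0 * y 5 - x 5 * y 0 + x 1 * y 4 - x 4 * y 1 + x 2 * y 3 - x 3 * y 2

def e2 : V6 := Pi.single 1 1
def f2 : V6 := Pi.single 4 1
def f1 : V6 := Pi.single 5 1

/-- `Sp₆(ℝ)`: matrices preserving the symplectic form (right action on row vectors). -/
def Sp6 : Set (Matrix (Fin 6) (Fin 6) ℝ) :=
  {g | ∀ v w : V6, symp (vecMul v g) (vecMul w g) = symp v w}

/-- The parabolic `R` stabilizing the isotropic plane `⟨f1, f2⟩`. -/
def Rpar : Set (Matrix (Fin 6) (Fin 6) ℝ) :=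
  {g | g ∈ Sp6 ∧ vecMul f1 g ∈ Submodule.span ℝ {f1, f2} ∧
    vecMul f2 g ∈ Submodule.span ℝ {f1, f2}}

/-- The Weyl representative `w_{(1,1)} = 1₂ ⊠ J₂ ⊠ 1₂` with `J₂ = [[0,−1],[1,0]]` acting on
`⟨e2, f2⟩`: `e2 ↦ −f2`, `f2 ↦ e2`, all other basis vectors fixed. -/
def w11 : Matrix (Fin 6) (Fin 6) ℝ :=
  Matrix.of ![![1,0,0,0,0,0], ![0,0,0,0,-1,0], ![0,0,1,0,0,0],
              ![0,0,0,1,0,0], ![0,1,0,0,0,0], ![0,0,0,0,0,1]]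

def W6 : Matrix (Fin 6) (Fin 6) ℝ :=
  Matrix.of ![![1,0,0,0,0,0], ![0,0,0,0,1,0], ![0,0,1,0,0,0],
              ![0,0,0,1,0,0], ![0,-1,0,0,0,0], ![0,0,0,0,0,1]]

@[simp] lemma w11e_00 : w11 0 0 = 1 := rfl
@[simp] lemma w11e_01 : w11 0 1 = 0 := rfl
@[simp] lemma w11e_02 : w11 0 2 = 0 := rfl
@[simp] lemma w11e_03 : w11 0 3 = 0 := rfl
@[simp] lemma w11e_04 : w11 0 4 = 0 := rfl
@[simp] lemma w11e_05 : w11 0 5 = 0 := rfl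
@[simp] lemma w11e_10 : w11 1 0 = 0 := rfl
@[simp] lemma w11e_11 : w11 1 1 = 0 := rfl
@[simp] lemma w11e_12 : w11 1 2 = 0 := rfl
@[simp] lemma w11e_13 : w11 1 3 = 0 := rfl
@[simp] lemma w11e_14 : w11 1 4 = (-1) := rfl
@[simp] lemma w11e_15 : w11 1 5 = 0 := rfl
@[simp] lemma w11e_20 : w11 2 0 = 0 := rfl
@[simp] lemma w11e_21 : w11 2 1 = 0 := rfl
@[simp] lemma w11e_22 : w11 2 2 = 1 := rfl
@[simp] lemma w11e_23 : w11 2 3 = 0 := rfl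
@[simp] lemma w11e_24 : w11 2 4 = 0 := rfl
@[simp] lemma w11e_25 : w11 2 5 = 0 := rfl
@[simp] lemma w11e_30 : w11 3 0 = 0 := rfl
@[simp] lemma w11e_31 : w11 3 1 = 0 := rfl
@[simp] lemma w11e_32 : w11 3 2 = 0 := rfl
@[simp] lemma w11e_33 : w11 3 3 = 1 := rfl
@[simp] lemma w11e_34 : w11 3 4 = 0 := rfl
@[simp] lemma w11e_35 : w11 3 5 = 0 := rfl
@[simp] lemma w11e_40 : w11 4 0 = 0 := rfl
@[simp] lemma w11e_41 : w11 4 1 = 1 := rfl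
@[simp] lemma w11e_42 : w11 4 2 = 0 := rfl
@[simp] lemma w11e_43 : w11 4 3 = 0 := rfl
@[simp] lemma w11e_44 : w11 4 4 = 0 := rfl
@[simp] lemma w11e_45 : w11 4 5 = 0 := rfl
@[simp] lemma w11e_50 : w11 5 0 = 0 := rfl
@[simp] lemma w11e_51 : w11 5 1 = 0 := rfl
@[simp] lemma w11e_52 : w11 5 2 = 0 := rfl
@[simp] lemma w11e_53 : w11 5 3 = 0 := rfl
@[simp] lemma w11e_54 : w11 5 4 = 0 := rfl
@[simp] lemma w11e_55 : w11 5 5 = 1 := rfl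
@[simp] lemma W6e_00 : W6 0 0 = 1 := rfl
@[simp] lemma W6e_01 : W6 0 1 = 0 := rfl
@[simp] lemma W6e_02 : W6 0 2 = 0 := rfl
@[simp] lemma W6e_03 : W6 0 3 = 0 := rfl
@[simp] lemma W6e_04 : W6 0 4 = 0 := rfl
@[simp] lemma W6e_05 : W6 0 5 = 0 := rfl
@[simp] lemma W6e_10 : W6 1 0 = 0 := rfl
@[simp] lemma W6e_11 : W6 1 1 = 0 := rfl
@[simp] lemma W6e_12 : W6 1 2 = 0 := rfl
@[simp] lemma W6e_13 : W6 1 3 = 0 := rfl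
@[simp] lemma W6e_14 : W6 1 4 = 1 := rfl
@[simp] lemma W6e_15 : W6 1 5 = 0 := rfl
@[simp] lemma W6e_20 : W6 2 0 = 0 := rfl
@[simp] lemma W6e_21 : W6 2 1 = 0 := rfl
@[simp] lemma W6e_22 : W6 2 2 = 1 := rfl
@[simp] lemma W6e_23 : W6 2 3 = 0 := rfl
@[simp] lemma W6e_24 : W6 2 4 = 0 := rfl
@[simp] lemma W6e_25 : W6 2 5 = 0 := rfl
@[simp] lemma W6e_30 : W6 3 0 = 0 := rfl
@[simp] lemma W6e_31 : W6 3 1 = 0 := rfl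
@[simp] lemma W6e_32 : W6 3 2 = 0 := rfl
@[simp] lemma W6e_33 : W6 3 3 = 1 := rfl
@[simp] lemma W6e_34 : W6 3 4 = 0 := rfl
@[simp] lemma W6e_35 : W6 3 5 = 0 := rfl
@[simp] lemma W6e_40 : W6 4 0 = 0 := rfl
@[simp] lemma W6e_41 : W6 4 1 = (-1) := rfl
@[simp] lemma W6e_42 : W6 4 2 = 0 := rfl
@[simp] lemma W6e_43 : W6 4 3 = 0 := rfl
@[simp] lemma W6e_44 : W6 4 4 = 0 := rfl
@[simp] lemma W6e_45 : W6 4 5 = 0 := rfl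
@[simp] lemma W6e_50 : W6 5 0 = 0 := rfl
@[simp] lemma W6e_51 : W6 5 1 = 0 := rfl
@[simp] lemma W6e_52 : W6 5 2 = 0 := rfl
@[simp] lemma W6e_53 : W6 5 3 = 0 := rfl
@[simp] lemma W6e_54 : W6 5 4 = 0 := rfl
@[simp] lemma W6e_55 : W6 5 5 = 1 := rfl


lemma w11_mul_W6 : w11 * W6 = 1 := by
  ext i j
  fin_cases i <;> fin_cases j <;>
    simp [Matrix.mul_apply, Fin.sum_univ_six, Matrix.one_apply]

lemma w11_inv : w11⁻¹ = W6 := Matrix.inv_eq_right_inv w11_mul_W6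

lemma mem_span_iff (v : V6) :
    v ∈ Submodule.span ℝ {f1, f2} ↔ v 0 = 0 ∧ v 1 = 0 ∧ v 2 = 0 ∧ v 3 = 0 := by
  rw [Submodule.mem_span_pair]
  constructor
  · rintro ⟨a, b, rfl⟩
    simp [f1, f2, Pi.single_apply]
  · rintro ⟨h0, h1, h2, h3⟩
    refine ⟨v 5, v 4, funext fun i => ?_⟩
    fin_cases i <;> simp [f1, f2, Pi.single_apply, h0, h1, h2, h3]

lemma w11_mem : w11 ∈ Sp6 := by
  intro v w
  simp only [symp, Matrix.vecMul, dotProduct, Fin.sum_univ_six,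
    w11e_00, w11e_01, w11e_02, w11e_03, w11e_04, w11e_05,
    w11e_10, w11e_11, w11e_12, w11e_13, w11e_14, w11e_15,
    w11e_20, w11e_21, w11e_22, w11e_23, w11e_24, w11e_25,
    w11e_30, w11e_31, w11e_32, w11e_33, w11e_34, w11e_35,
    w11e_40, w11e_41, w11e_42, w11e_43, w11e_44, w11e_45,
    w11e_50, w11e_51, w11e_52, w11e_53, w11e_54, w11e_55]
  ring

lemma W6_mem : W6 ∈ Sp6 := by
  intro v w
  simp only [symp, Matrix.vecMul, dotProduct, Fin.sum_univ_six,
    W6e_00, W6e_01, W6e_02, W6e_03, W6e_04, W6e_05,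
    W6e_10, W6e_11, W6e_12, W6e_13, W6e_14, W6e_15,
    W6e_20, W6e_21, W6e_22, W6e_23, W6e_24, W6e_25,
    W6e_30, W6e_31, W6e_32, W6e_33, W6e_34, W6e_35,
    W6e_40, W6e_41, W6e_42, W6e_43, W6e_44, W6e_45,
    W6e_50, W6e_51, W6e_52, W6e_53, W6e_54, W6e_55]
  ring

lemma Sp6_mul {A B : Matrix (Fin 6) (Fin 6) ℝ} (hA : A ∈ Sp6) (hB : B ∈ Sp6) :
    A * B ∈ Sp6 := by
  intro v w
  rw [← Matrix.vecMul_vecMul, ← Matrix.vecMul_vecMul]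
  exact (hB _ _).trans (hA _ _)

lemma conj50 (g : Matrix (Fin 6) (Fin 6) ℝ) : (w11 * g * W6) 5 0 = g 5 0 := by
  simp [Matrix.mul_apply, Fin.sum_univ_six]
lemma conj51 (g : Matrix (Fin 6) (Fin 6) ℝ) : (w11 * g * W6) 5 1 = -g 5 4 := by
  simp [Matrix.mul_apply, Fin.sum_univ_six]
lemma conj52 (g : Matrix (Fin 6) (Fin 6) ℝ) : (w11 * g * W6) 5 2 = g 5 2 := by
  simp [Matrix.mul_apply, Fin.sum_univ_six]
lemma conj53 (g : Matrix (Fin 6) (Fin 6) ℝ) : (w11 * g * W6) 5 3 = g 5 3 := by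
  simp [Matrix.mul_apply, Fin.sum_univ_six]
lemma conj40 (g : Matrix (Fin 6) (Fin 6) ℝ) : (w11 * g * W6) 4 0 = g 1 0 := by
  simp [Matrix.mul_apply, Fin.sum_univ_six]
lemma conj41 (g : Matrix (Fin 6) (Fin 6) ℝ) : (w11 * g * W6) 4 1 = -g 1 4 := by
  simp [Matrix.mul_apply, Fin.sum_univ_six]
lemma conj42 (g : Matrix (Fin 6) (Fin 6) ℝ) : (w11 * g * W6) 4 2 = g 1 2 := by
  simp [Matrix.mul_apply, Fin.sum_univ_six]
lemma conj43 (g : Matrix (Fin 6) (Fin 6) ℝ) : (w11 * g * W6) 4 3 = g 1 3 := by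
  simp [Matrix.mul_apply, Fin.sum_univ_six]

/-- `R ∩ w_{(1,1)}^{-1} R w_{(1,1)}` consists exactly of the symplectic matrices of the block
form with diagonal `(t1, t2, m2, t2⁻¹, t1⁻¹)`, `m2 ∈ Sp₂` (acting on `⟨e3,f3⟩`, i.e. of
determinant 1), and arbitrary entries only in positions `(1,2),(1,3),(1,4),(1,5),(2,5),(3,5),
(4,5)` of the block decomposition (subject to the symplectic condition). -/
theorem R11_description :
    {g : Matrix (Fin 6) (Fin 6) ℝ | g ∈ Rpar ∧ w11 * g * w11⁻¹ ∈ Rpar} =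
    {g : Matrix (Fin 6) (Fin 6) ℝ | g ∈ Sp6 ∧ ∃ t1 t2 : ℝ, t1 ≠ 0 ∧ t2 ≠ 0 ∧
      g 0 0 = t1 ∧ g 1 1 = t2 ∧ g 4 4 = t2⁻¹ ∧ g 5 5 = t1⁻¹ ∧
      g 2 2 * g 3 3 - g 2 3 * g 3 2 = 1 ∧
      g 1 0 = 0 ∧ g 1 2 = 0 ∧ g 1 3 = 0 ∧ g 1 4 = 0 ∧
      g 2 0 = 0 ∧ g 2 1 = 0 ∧ g 2 4 = 0 ∧
      g 3 0 = 0 ∧ g 3 1 = 0 ∧ g 3 4 = 0 ∧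
      g 4 0 = 0 ∧ g 4 1 = 0 ∧ g 4 2 = 0 ∧ g 4 3 = 0 ∧
      g 5 0 = 0 ∧ g 5 1 = 0 ∧ g 5 2 = 0 ∧ g 5 3 = 0 ∧ g 5 4 = 0} := by
  ext g
  simp only [Set.mem_setOf_eq, Rpar, w11_inv]
  constructor
  · rintro ⟨⟨hg, hr5, hr4⟩, -, hr5', hr4'⟩
    rw [mem_span_iff] at hr5 hr4 hr5' hr4'
    simp only [f1, f2, Matrix.single_one_vecMul, Matrix.row] at hr5 hr4 hr5' hr4'
    obtain ⟨z50, z51, z52, z53⟩ := hr5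
    obtain ⟨z40, z41, z42, z43⟩ := hr4
    rw [conj50, conj51, conj52, conj53] at hr5'
    rw [conj40, conj41, conj42, conj43] at hr4'
    have z54 : g 5 4 = 0 := neg_eq_zero.mp hr5'.2.1
    obtain ⟨z10, z14', z12, z13⟩ := hr4'
    have z14 : g 1 4 = 0 := neg_eq_zero.mp z14'
    -- symplectic relations on the rows
    have E05 := hg (Pi.single 0 1) (Pi.single 5 1)
    have E14 := hg (Pi.single 1 1) (Pi.single 4 1)
    have E25 := hg (Pi.single 2 1) (Pi.single 5 1)
    have E35 := hg (Pi.single 3 1) (Pi.single 5 1)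
    have E24 := hg (Pi.single 2 1) (Pi.single 4 1)
    have E34 := hg (Pi.single 3 1) (Pi.single 4 1)
    have E21 := hg (Pi.single 2 1) (Pi.single 1 1)
    have E31 := hg (Pi.single 3 1) (Pi.single 1 1)
    have E23 := hg (Pi.single 2 1) (Pi.single 3 1)
    simp only [symp, Matrix.single_one_vecMul, Pi.single_apply] at E05 E14 E25 E35 E24 E34 E21 E31 E23
    simp [z50, z51, z52, z53, z40, z41, z42, z43, z54, z10, z12, z13, z14] at E05 E14 E25 E35 E24 E34 E21 E31 E23
    -- E05 : g 0 0 * g 5 5 = 1, E14 : g 1 1 * g 4 4 = 1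
    have h00 : g 0 0 ≠ 0 := left_ne_zero_of_mul_eq_one E05
    have h55 : g 5 5 ≠ 0 := right_ne_zero_of_mul_eq_one E05
    have h11 : g 1 1 ≠ 0 := left_ne_zero_of_mul_eq_one E14
    have h44 : g 4 4 ≠ 0 := right_ne_zero_of_mul_eq_one E14
    have z20 : g 2 0 = 0 := E25.resolve_right h55
    have z30 : g 3 0 = 0 := E35.resolve_right h55
    simp [z20] at E24 E21
    simp [z30] at E34 E31
    have z21 : g 2 1 = 0 := E24.resolve_right h44
    have z31 : g 3 1 = 0 := E34.resolve_right h44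
    have z24 : g 2 4 = 0 := E21.resolve_right h11
    have z34 : g 3 4 = 0 := E31.resolve_right h11
    have Hdet : g 2 2 * g 3 3 - g 2 3 * g 3 2 = 1 := by
      rw [z20, z30, z21, z24] at E23; linarith [E23]
    have H44 : g 4 4 = (g 1 1)⁻¹ := eq_inv_of_mul_eq_one_right E14
    have H55 : g 5 5 = (g 0 0)⁻¹ := eq_inv_of_mul_eq_one_right E05
    exact ⟨hg, g 0 0, g 1 1, h00, h11, rfl, rfl, H44, H55, Hdet, z10, z12, z13, z14,
      z20, z21, z24, z30, z31, z34, z40, z41, z42, z43, z50, z51, z52, z53, z54⟩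
  · rintro ⟨hg, t1, t2, ht1, ht2, h00, h11, h44, h55, hdet, z10, z12, z13, z14,
      z20, z21, z24, z30, z31, z34, z40, z41, z42, z43, z50, z51, z52, z53, z54⟩
    refine ⟨⟨hg, ?_, ?_⟩, Sp6_mul (Sp6_mul w11_mem hg) W6_mem, ?_, ?_⟩
    · rw [mem_span_iff]
      simp only [f1, Matrix.single_one_vecMul, Matrix.row]
      exact ⟨z50, z51, z52, z53⟩
    · rw [mem_span_iff]
      simp only [f2, Matrix.single_one_vecMul, Matrix.row]
      exact ⟨z40, z41, z42, z43⟩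
    · rw [mem_span_iff]
      simp only [f1, Matrix.single_one_vecMul, Matrix.row, conj50, conj51, conj52, conj53]
      exact ⟨z50, by rw [z54, neg_zero], z52, z53⟩
    · rw [mem_span_iff]
      simp only [f2, Matrix.single_one_vecMul, Matrix.row, conj40, conj41, conj42, conj43]
      exact ⟨z10, by rw [z14, neg_zero], z12, z13⟩

end
end
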